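/- There do not exist 2×2 unitaries v₁, v₂ and a 4×4 unitary U such that U (v₂ ⊗ I₂) U† = (v₁ ⊗ I₂) S, where S is the swap gate on ℂ²⊗ℂ². Equivalently, (v₁ ⊗ I₂)S never has the same eigenvalue multiset as an operator of the form v₂ ⊗ I₂. -/

import Mathlib

open Matrix

noncomputable section

/-- `v ⊗ I₂`: the Kronecker product of a 2×2 matrix `v` with the 2×2 identity, acting on the
first tensor factor of `ℂ² ⊗ ℂ²`. -/
def kronId (v : Matrix (Fin 2) (Fin 2) ℂ) :
    Matrix (Fin 2 × Fin 2) (Fin 2 × Fin 2) ℂ :=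
  Matrix.of fun p q => v p.1 q.1 * (if p.2 = q.2 then 1 else 0)

/-- The swap gate `S` on `ℂ² ⊗ ℂ²`: `S|xy⟩ = |yx⟩`. -/
def SwapGate : Matrix (Fin 2 × Fin 2) (Fin 2 × Fin 2) ℂ :=
  Matrix.of fun p q => if p.1 = q.2 ∧ p.2 = q.1 then 1 else 0

lemma tr_kron (v : Matrix (Fin 2) (Fin 2) ℂ) :
    (kronId v).trace = 2 * v.trace := by
  simp [kronId, Matrix.trace, Matrix.diag, Fintype.sum_prod_type, Fin.sum_univ_two]
  ring

lemma tr_kron_sq (v : Matrix (Fin 2) (Fin 2) ℂ) :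
    (kronId v * kronId v).trace = 2 * (v * v).trace := by
  simp [kronId, Matrix.trace, Matrix.diag, Matrix.mul_apply, Fintype.sum_prod_type,
    Fin.sum_univ_two]
  ring

lemma tr_BS (v : Matrix (Fin 2) (Fin 2) ℂ) :
    (kronId v * SwapGate).trace = v.trace := by
  simp [kronId, SwapGate, Matrix.trace, Matrix.diag, Matrix.mul_apply, Fintype.sum_prod_type,
    Fin.sum_univ_two]

lemma tr_BS_sq (v : Matrix (Fin 2) (Fin 2) ℂ) :
    ((kronId v * SwapGate) * (kronId v * SwapGate)).trace = v.trace ^ 2 := by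
  simp [kronId, SwapGate, Matrix.trace, Matrix.diag, Matrix.mul_apply, Fintype.sum_prod_type,
    Fin.sum_univ_two]
  ring

lemma cayley (v : Matrix (Fin 2) (Fin 2) ℂ) :
    (v * v).trace = v.trace ^ 2 - 2 * v.det := by
  simp [Matrix.trace, Matrix.diag, Matrix.mul_apply, Matrix.det_fin_two, Fin.sum_univ_two]
  ring

lemma trace_abs_le (w : Matrix (Fin 2) (Fin 2) ℂ) (hw : w ∈ Matrix.unitaryGroup (Fin 2) ℂ) :
    ‖w.trace‖ ≤ 2 := by
  have h : w * wᴴ = 1 := mem_unitaryGroup_iff.mp hw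
  have h0 : (w * wᴴ) 0 0 = 1 := by rw [h]; simp
  have h1 : (w * wᴴ) 1 1 = 1 := by rw [h]; simp
  simp only [Matrix.mul_apply, Matrix.conjTranspose_apply, Fin.sum_univ_two,
    Complex.star_def, Complex.mul_conj] at h0 h1
  have e0 : Complex.normSq (w 0 0) + Complex.normSq (w 0 1) = 1 := by
    exact_mod_cast h0
  have e1 : Complex.normSq (w 1 0) + Complex.normSq (w 1 1) = 1 := by
    exact_mod_cast h1
  have a0 : ‖w 0 0‖ ≤ 1 := by
    rw [← Real.sqrt_one]
    rw [Complex.norm_def]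
    apply Real.sqrt_le_sqrt
    nlinarith [Complex.normSq_nonneg (w 0 1)]
  have a1 : ‖w 1 1‖ ≤ 1 := by
    rw [← Real.sqrt_one]
    rw [Complex.norm_def]
    apply Real.sqrt_le_sqrt
    nlinarith [Complex.normSq_nonneg (w 1 0)]
  have : w.trace = w 0 0 + w 1 1 := by
    simp [Matrix.trace, Matrix.diag, Fin.sum_univ_two]
  rw [this]
  calc ‖w 0 0 + w 1 1‖ ≤ ‖w 0 0‖ + ‖w 1 1‖ :=
        norm_add_le _ _
    _ ≤ 2 := by linarith

/-- There are no 2×2 unitaries `v₁, v₂` and 4×4 unitary `U` with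
`U (v₂ ⊗ I₂) U† = (v₁ ⊗ I₂) S`: an operator of the form `(v₁ ⊗ I₂)S` is never unitarily
equivalent to one of the form `v₂ ⊗ I₂`. -/
theorem swap_not_conjugate_to_local :
    ¬ ∃ (v₁ v₂ : Matrix (Fin 2) (Fin 2) ℂ)
        (U : Matrix (Fin 2 × Fin 2) (Fin 2 × Fin 2) ℂ),
        v₁ ∈ Matrix.unitaryGroup (Fin 2) ℂ ∧ v₂ ∈ Matrix.unitaryGroup (Fin 2) ℂ ∧
        U ∈ Matrix.unitaryGroup (Fin 2 × Fin 2) ℂ ∧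
        U * kronId v₂ * Uᴴ = kronId v₁ * SwapGate := by
  rintro ⟨v₁, v₂, U, h1, h2, hU, hEq⟩
  have hUU : Uᴴ * U = 1 := mem_unitaryGroup_iff'.mp hU
  have key : ∀ X : Matrix (Fin 2 × Fin 2) (Fin 2 × Fin 2) ℂ, Uᴴ * (U * X) = X := by
    intro X; rw [← Matrix.mul_assoc, hUU, Matrix.one_mul]
  have ht : (kronId v₁ * SwapGate).trace = (kronId v₂).trace := by
    rw [← hEq, Matrix.trace_mul_cycle, hUU, Matrix.one_mul]
  have hmul : kronId v₁ * SwapGate * (kronId v₁ * SwapGate)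
      = U * (kronId v₂ * kronId v₂) * Uᴴ := by
    rw [← hEq]
    simp only [Matrix.mul_assoc, key]
  have hsq : (kronId v₁ * SwapGate * (kronId v₁ * SwapGate)).trace
      = (kronId v₂ * kronId v₂).trace := by
    rw [hmul, Matrix.trace_mul_cycle, hUU, Matrix.one_mul]
  rw [tr_BS, tr_kron] at ht
  rw [tr_BS_sq, tr_kron_sq, cayley, ht] at hsq
  set t := v₂.trace with htdef
  have hd : v₂.det = -(t ^ 2) / 2 := by linear_combination hsq / 4
  have habs : ‖v₂.det‖ = 1 := by
    have hm := Matrix.det_of_mem_unitary h2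
    have hs := (Unitary.mem_iff.mp hm).1
    have h' := congrArg (‖·‖) hs
    simp only [Complex.star_def, norm_mul, Complex.norm_conj, norm_one] at h'
    rcases mul_self_eq_one_iff.mp h' with h | h
    · exact h
    · have := norm_nonneg v₂.det; linarith
  have hat : ‖t‖ ^ 2 = 2 := by
    rw [hd] at habs
    rw [norm_div, norm_neg, norm_pow] at habs
    simp at habs
    linarith
  have h4 : ‖(v₂ * v₂).trace‖ = 4 := by
    have h2t : (v₂ * v₂).trace = 2 * t ^ 2 := by rw [cayley, hd]; ring
    rw [h2t, norm_mul, norm_pow, hat]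
    norm_num
  have hle := trace_abs_le (v₂ * v₂) (mul_mem h2 h2)
  linarith

end
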